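/- Let S = {x : Bx ≥ b} ≠ ∅ and let t* ∈ Δ := {y* ∈ ℝ^q : w(y*) ∈ (𝒫^h)^+}, where 𝒫^h = P[S^h] + C with S^h = {x : Bx ≥ 0}. Set w = w(t*). Then the scalarized problem P₁(w): min w^T Px subject to Bx ≥ b has an optimal solution. -/

import Mathlib

open Matrix

/-- w(y*) = (y*_1, …, y*_{q-1}, 1 - Σ_{i<q} c_i y*_i). -/
def wOf (q : ℕ) (c ystar : Fin (q + 1) → ℝ) : Fin (q + 1) → ℝ :=
  Function.update ystar (Fin.last q) (1 - ∑ i : Fin q, c i.castSucc * ystar i.castSucc)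

set_option maxRecDepth 16000

open scoped InnerProductSpace

namespace LPAux

variable {N : ℕ}

def cone {ι : Type*} [Fintype ι] (v : ι → EuclideanSpace ℝ (Fin N)) :
    Set (EuclideanSpace ℝ (Fin N)) :=
  {x | ∃ l : ι → ℝ, (∀ i, 0 ≤ l i) ∧ x = ∑ i, l i • v i}

lemma caratheodory {ι : Type*} [Fintype ι] [DecidableEq ι]
    (v : ι → EuclideanSpace ℝ (Fin N)) (S : Finset ι) (l : ι → ℝ) (hl : ∀ i, 0 ≤ l i) :
    ∃ (T : Finset ι) (μ : ι → ℝ), (∀ i, 0 ≤ μ i) ∧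
      LinearIndependent ℝ (fun i : T => v i) ∧
      ∑ i ∈ T, μ i • v i = ∑ i ∈ S, l i • v i := by
  induction S using Finset.strongInduction generalizing l with
  | _ S ih =>
  by_cases hLI : LinearIndependent ℝ (fun i : S => v i)
  · exact ⟨S, l, hl, hLI, rfl⟩
  · obtain ⟨g₀, hg₀sum, i₀', hg₀ne⟩ := Fintype.not_linearIndependent_iff.1 hLI
    set g : ι → ℝ := fun i => if h : i ∈ S then g₀ ⟨i, h⟩ else 0 with hgdef
    have hgS : ∀ i ∉ S, g i = 0 := fun i hi => dif_neg hi
    have hgsum : ∑ i ∈ S, g i • v i = 0 := by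
      rw [← Finset.sum_coe_sort S (fun i => g i • v i)] at *
      rw [← hg₀sum]
      exact Finset.sum_congr rfl fun i _ => by simp [hgdef, i.2]
    have hgne : ∃ i ∈ S, g i ≠ 0 := ⟨i₀', i₀'.2, by simpa [hgdef, i₀'.2] using hg₀ne⟩
    clear hgdef hg₀sum hg₀ne hLI
    obtain ⟨g, hgS, hgsum, hgpos⟩ :
        ∃ g : ι → ℝ, (∀ i ∉ S, g i = 0) ∧ (∑ i ∈ S, g i • v i = 0) ∧ ∃ i ∈ S, 0 < g i := by
      obtain ⟨i₁, hi₁S, hi₁⟩ := hgne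
      rcases lt_or_gt_of_ne hi₁ with h | h
      · exact ⟨-g, fun i hi => by simp [hgS i hi],
          by simp only [Pi.neg_apply, neg_smul]; rw [Finset.sum_neg_distrib, hgsum, neg_zero],
          i₁, hi₁S, by simpa using h⟩
      · exact ⟨g, hgS, hgsum, i₁, hi₁S, h⟩
    classical
    set F : Finset ι := S.filter (fun i => 0 < g i) with hF
    have hFne : F.Nonempty := by
      obtain ⟨i, hiS, hig⟩ := hgpos
      exact ⟨i, by simp [hF, hiS, hig]⟩
    obtain ⟨i₀, hi₀F, hi₀min⟩ := F.exists_min_image (fun i => l i / g i) hFne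
    have hi₀S : i₀ ∈ S := (Finset.mem_filter.1 hi₀F).1
    have hgi₀ : 0 < g i₀ := (Finset.mem_filter.1 hi₀F).2
    set t : ℝ := l i₀ / g i₀ with ht
    have htnn : 0 ≤ t := div_nonneg (hl i₀) hgi₀.le
    set l' : ι → ℝ := fun i => l i - t * g i with hl'
    have hl'nn : ∀ i, 0 ≤ l' i := by
      intro i
      by_cases hiS : i ∈ S
      · rcases le_or_gt (g i) 0 with h | h
        · have : t * g i ≤ 0 := mul_nonpos_of_nonneg_of_nonpos htnn h
          simp only [hl']; linarith [hl i]
        · have hiF : i ∈ F := by simp [hF, hiS, h]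
          have := hi₀min i hiF
          have : t * g i ≤ l i := by
            rw [ht]
            calc l i₀ / g i₀ * g i ≤ l i / g i * g i := by
                  exact mul_le_mul_of_nonneg_right this h.le
              _ = l i := div_mul_cancel₀ _ h.ne'
          simp only [hl']; linarith
      · simp [hl', hgS i hiS, hl i]
    have hl'i₀ : l' i₀ = 0 := by
      simp only [hl', ht]
      field_simp
      ring
    have hsum' : ∑ i ∈ S, l' i • v i = ∑ i ∈ S, l i • v i := by
      simp only [hl', sub_smul, Finset.sum_sub_distrib, ← smul_smul]
      rw [← Finset.smul_sum, hgsum, smul_zero, sub_zero]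
    have herase : S.erase i₀ ⊂ S := Finset.erase_ssubset hi₀S
    obtain ⟨T, μ, hμ, hLI, hsum⟩ := ih _ herase l' hl'nn
    refine ⟨T, μ, hμ, hLI, ?_⟩
    rw [hsum, Finset.sum_erase _ (by rw [hl'i₀, zero_smul]), hsum']

lemma isClosed_li_cone {ι : Type*} [Fintype ι] (v : ι → EuclideanSpace ℝ (Fin N))
    (hv : LinearIndependent ℝ v) :
    IsClosed {x : EuclideanSpace ℝ (Fin N) | ∃ μ : ι → ℝ, (∀ i, 0 ≤ μ i) ∧ x = ∑ i, μ i • v i} := by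
  classical
  let L : (ι → ℝ) →ₗ[ℝ] EuclideanSpace ℝ (Fin N) :=
    { toFun := fun μ => ∑ i, μ i • v i
      map_add' := fun a b => by simp [add_smul, Finset.sum_add_distrib]
      map_smul' := fun r a => by simp [← smul_smul, ← Finset.smul_sum] }
  have hker : LinearMap.ker L = ⊥ := by
    rw [LinearMap.ker_eq_bot']
    intro μ hμ
    funext i
    exact Fintype.linearIndependent_iff.1 hv μ hμ i
  have hclosed : IsClosed {μ : ι → ℝ | ∀ i, 0 ≤ μ i} := by
    have : {μ : ι → ℝ | ∀ i, 0 ≤ μ i} = ⋂ i, (fun μ : ι → ℝ => μ i) ⁻¹' Set.Ici 0 := by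
      ext; simp
    rw [this]
    exact isClosed_iInter fun i => isClosed_Ici.preimage (continuous_apply i)
  have himg := (LinearMap.isClosedEmbedding_of_injective hker).isClosedMap _ hclosed
  convert himg using 1
  ext x
  constructor
  · rintro ⟨μ, hμ, rfl⟩; exact ⟨μ, hμ, rfl⟩
  · rintro ⟨μ, hμ, rfl⟩; exact ⟨μ, hμ, rfl⟩
lemma isClosed_cone {ι : Type*} [Fintype ι] (v : ι → EuclideanSpace ℝ (Fin N)) :
    IsClosed (cone v) := by
  classical
  have hEq : cone v = ⋃ T : Finset ι,
      {x : EuclideanSpace ℝ (Fin N) | LinearIndependent ℝ (fun i : T => v i) ∧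
        ∃ μ : ↥T → ℝ, (∀ i, 0 ≤ μ i) ∧ x = ∑ i : T, μ i • v i} := by
    ext x
    simp only [Set.mem_iUnion, Set.mem_setOf_eq]
    constructor
    · rintro ⟨l, hl, rfl⟩
      obtain ⟨T, μ, hμ, hLI, hsum⟩ := caratheodory v Finset.univ l hl
      refine ⟨T, hLI, fun i => μ i, fun i => hμ i, ?_⟩
      rw [Finset.sum_coe_sort T (fun i => μ i • v i), hsum]
    · rintro ⟨T, hLI, μ, hμ, rfl⟩
      refine ⟨fun j => if h : j ∈ T then μ ⟨j, h⟩ else 0, fun j => by by_cases h : j ∈ T <;> simp [h, hμ], ?_⟩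
      have hsub : ∑ i : T, μ i • v i
          = ∑ i ∈ T, (fun j => if h : j ∈ T then μ ⟨j, h⟩ else 0) i • v i := by
        rw [← Finset.sum_coe_sort T (fun i => (fun j => if h : j ∈ T then μ ⟨j, h⟩ else 0) i • v i)]
        exact Finset.sum_congr rfl fun i _ => by simp [i.2]
      rw [hsub]
      beta_reduce
      exact Finset.sum_subset (Finset.subset_univ T) (by intro i _ hi; show (if h : i ∈ T then μ ⟨i, h⟩ else 0) • v i = 0; rw [dif_neg hi, zero_smul])
  rw [hEq]
  refine isClosed_iUnion_of_finite fun T => ?_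
  by_cases hLI : LinearIndependent ℝ (fun i : T => v i)
  · have : {x : EuclideanSpace ℝ (Fin N) | LinearIndependent ℝ (fun i : T => v i) ∧
        ∃ μ : ↥T → ℝ, (∀ i, 0 ≤ μ i) ∧ x = ∑ i : T, μ i • v i}
        = {x | ∃ μ : ↥T → ℝ, (∀ i, 0 ≤ μ i) ∧ x = ∑ i : T, μ i • v i} := by
      ext x; simp [hLI]
    rw [this]
    exact isClosed_li_cone _ hLI
  · have : {x : EuclideanSpace ℝ (Fin N) | LinearIndependent ℝ (fun i : T => v i) ∧
        ∃ μ : ↥T → ℝ, (∀ i, 0 ≤ μ i) ∧ x = ∑ i : T, μ i • v i} = ∅ := by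
      ext x; simp [hLI]
    rw [this]
    exact isClosed_empty
lemma mem_cone_self {ι : Type*} [Fintype ι] [DecidableEq ι]
    (v : ι → EuclideanSpace ℝ (Fin N)) (i : ι) : v i ∈ cone v := by
  refine ⟨fun j => if j = i then 1 else 0, fun j => by positivity, ?_⟩
  have : ∀ j : ι, (fun j => if j = i then (1:ℝ) else 0) j • v j
      = if j = i then v j else 0 := by
    intro j; by_cases h : j = i <;> simp [h]
  rw [Finset.sum_congr rfl fun j _ => this j, Finset.sum_ite_eq' Finset.univ i v]
  simp

lemma separation {ι : Type*} [Fintype ι] (v : ι → EuclideanSpace ℝ (Fin N))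
    (a : EuclideanSpace ℝ (Fin N)) (ha : a ∉ cone v) :
    ∃ y : EuclideanSpace ℝ (Fin N), (∀ i, 0 ≤ ⟪v i, y⟫_ℝ) ∧ ⟪y, a⟫_ℝ < 0 := by
  classical
  let K : ConvexCone ℝ (EuclideanSpace ℝ (Fin N)) :=
    { carrier := cone v
      smul_mem' := by
        rintro t ht x ⟨l, hl, rfl⟩
        exact ⟨fun i => t * l i, fun i => mul_nonneg ht.le (hl i), by
          rw [Finset.smul_sum]; exact Finset.sum_congr rfl fun i _ => smul_smul t (l i) (v i)⟩
      add_mem' := by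
        rintro x ⟨l, hl, rfl⟩ y ⟨l', hl', rfl⟩
        exact ⟨fun i => l i + l' i, fun i => add_nonneg (hl i) (hl' i), by
          rw [← Finset.sum_add_distrib]
          exact Finset.sum_congr rfl fun i _ => (add_smul (l i) (l' i) (v i)).symm⟩ }
  have hne : (K : Set (EuclideanSpace ℝ (Fin N))).Nonempty :=
    ⟨0, ⟨fun _ => 0, fun _ => le_refl 0, by simp⟩⟩
  obtain ⟨y, hy1, hy2⟩ :=
    ProperCone.hyperplane_separation' (⟨K.toPointedCone (ConvexCone.Pointed.of_nonempty_of_isClosed hne (isClosed_cone v)),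
      isClosed_cone v⟩ : ProperCone ℝ (EuclideanSpace ℝ (Fin N))) ha
  exact ⟨y, fun i => hy1 _ (mem_cone_self v i), by rw [real_inner_comm]; exact hy2⟩
lemma inner_eq_dot (x y : EuclideanSpace ℝ (Fin N)) :
    ⟪x, y⟫_ℝ = ∑ i, x i * y i := by
  simp [PiLp.inner_apply, RCLike.inner_apply, mul_comm]

lemma cone_apply {ι : Type*} [Fintype ι] (v : ι → EuclideanSpace ℝ (Fin N))
    (l : ι → ℝ) (j : Fin N) : (∑ i, l i • v i) j = ∑ i, l i * v i j := by
  have h1 : (∑ i, l i • v i) j = ∑ i, (l i • v i) j :=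
    by rw [WithLp.ofLp_sum, Finset.sum_apply]
  rw [h1]
  exact Finset.sum_congr rfl fun i _ => rfl

lemma gale {M n : ℕ} (rows : Fin M → (Fin n → ℝ)) (a : Fin M → ℝ)
    (hinfeas : ¬ ∃ x : Fin n → ℝ, ∀ i, a i ≤ rows i ⬝ᵥ x) :
    ∃ y : Fin M → ℝ, (∀ i, 0 ≤ y i) ∧ (∀ j, ∑ i, y i * rows i j = 0) ∧ 0 < ∑ i, a i * y i := by
  classical
  set v : (Fin n ⊕ Fin n ⊕ Fin M) → EuclideanSpace ℝ (Fin M) :=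
    Sum.elim (fun j => WithLp.toLp 2 (fun i => rows i j : Fin M → ℝ))
      (Sum.elim (fun j => WithLp.toLp 2 (fun i => -rows i j : Fin M → ℝ))
        (fun i₀ => WithLp.toLp 2 (fun i => if i = i₀ then (-1:ℝ) else 0 : Fin M → ℝ))) with hv
  have ha : WithLp.toLp 2 a ∉ cone v := by
    rintro ⟨l, hl, hsum⟩
    apply hinfeas
    refine ⟨fun j => l (Sum.inl j) - l (Sum.inr (Sum.inl j)), fun i => ?_⟩
    have hai : a i = ∑ k, l k * v k i := by
        have := congrArg (fun z : EuclideanSpace ℝ (Fin M) => WithLp.ofLp z i) hsum; simp only [cone_apply] at this; exact this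
    rw [hai, Fintype.sum_sum_type, Fintype.sum_sum_type]
    have h3 : ∑ k : Fin M, l (Sum.inr (Sum.inr k)) * v (Sum.inr (Sum.inr k)) i ≤ 0 := by
      apply Finset.sum_nonpos
      intro k _
      simp only [hv, Sum.elim_inr, WithLp.ofLp_toLp]
      by_cases h : i = k
      · simp only [if_pos h]
        nlinarith [hl (Sum.inr (Sum.inr k))]
      · simp [if_neg h]
    have h4 : rows i ⬝ᵥ (fun j => l (Sum.inl j) - l (Sum.inr (Sum.inl j)))
        = ∑ j : Fin n, l (Sum.inl j) * v (Sum.inl j) i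
          + ∑ j : Fin n, l (Sum.inr (Sum.inl j)) * v (Sum.inr (Sum.inl j)) i := by
      simp only [hv, Sum.elim_inl, Sum.elim_inr, dotProduct, WithLp.ofLp_toLp]
      rw [← Finset.sum_add_distrib]
      exact Finset.sum_congr rfl fun j _ => by ring
    rw [h4]
    linarith
  obtain ⟨y', hy'1, hy'2⟩ := separation v (WithLp.toLp 2 a) ha
  refine ⟨fun i => -y' i, fun i => ?_, fun j => ?_, ?_⟩ <;> beta_reduce
  · have := hy'1 (Sum.inr (Sum.inr i))
    rw [inner_eq_dot] at this
    simp only [hv, Sum.elim_inr] at this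
    have heq : ∑ k, (if k = i then (-1:ℝ) else 0) * y' k = -y' i := by
      rw [Finset.sum_eq_single i] <;> simp +contextual
    rw [heq] at this
    linarith
  · have h1 := hy'1 (Sum.inl j)
    have h2 := hy'1 (Sum.inr (Sum.inl j))
    rw [inner_eq_dot] at h1 h2
    simp only [hv, Sum.elim_inl, Sum.elim_inr] at h1 h2
    have h2' : ∑ i, -rows i j * y' i = -∑ i, rows i j * y' i := by
      rw [← Finset.sum_neg_distrib]; exact Finset.sum_congr rfl fun i _ => by ring
    rw [h2'] at h2
    have h0 : ∑ i, rows i j * y' i = 0 := le_antisymm (by linarith) h1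
    calc ∑ i, -y' i * rows i j = -∑ i, rows i j * y' i := by
          rw [← Finset.sum_neg_distrib]; exact Finset.sum_congr rfl fun i _ => by ring
      _ = 0 := by rw [h0, neg_zero]
  · rw [inner_eq_dot, WithLp.ofLp_toLp] at hy'2
    have : ∑ i, a i * -y' i = -∑ i, y' i * a i := by
      rw [← Finset.sum_neg_distrib]; exact Finset.sum_congr rfl fun i _ => by ring
    rw [this]
    linarith

lemma dual_exists {M n : ℕ} (rows : Fin M → (Fin n → ℝ)) (c' : Fin n → ℝ)
    (h : ∀ d : Fin n → ℝ, (∀ i, 0 ≤ rows i ⬝ᵥ d) → 0 ≤ c' ⬝ᵥ d) :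
    ∃ y : Fin M → ℝ, (∀ i, 0 ≤ y i) ∧ ∀ j, ∑ i, y i * rows i j = c' j := by
  classical
  by_cases hc : WithLp.toLp 2 c' ∈ cone (fun i : Fin M => WithLp.toLp 2 (rows i))
  · obtain ⟨y, hy, hsum⟩ := hc
    refine ⟨y, hy, fun j => ?_⟩
    have := congrArg (fun z : EuclideanSpace ℝ (Fin n) => WithLp.ofLp z j) hsum
    simp only [cone_apply] at this; exact this.symm
  · obtain ⟨d, hd1, hd2⟩ := separation _ _ hc
    exfalso
    have hfeas : ∀ i, 0 ≤ rows i ⬝ᵥ d.ofLp := by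
      intro i
      have := hd1 i
      rwa [inner_eq_dot] at this
    have := h d.ofLp hfeas
    rw [inner_eq_dot, WithLp.ofLp_toLp] at hd2
    have hdc : c' ⬝ᵥ d.ofLp = ∑ i, d i * c' i := Finset.sum_congr rfl fun i _ => by ring
    rw [hdc] at this
    linarith
lemma dual_lb {m n : ℕ} (Bm : Matrix (Fin m) (Fin n) ℝ) (bv yv : Fin m → ℝ)
    (hy : ∀ i, 0 ≤ yv i) (x : Fin n → ℝ) (hx : bv ≤ Bm.mulVec x) :
    yv ⬝ᵥ bv ≤ (vecMul yv Bm) ⬝ᵥ x := by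
  rw [← Matrix.dotProduct_mulVec]
  exact Finset.sum_le_sum fun i _ => mul_le_mul_of_nonneg_left (hx i) (hy i)

end LPAux

/-- If S ≠ ∅ and t* ∈ Δ = {y* : w(y*) ∈ (𝒫ʰ)⁺}, then the scalarized problem
P₁(w(t*)): min w(t*)ᵀ P x s.t. Bx ≥ b has an optimal solution. -/
theorem P1_has_optimal_solution
    (q n m p : ℕ)
    (B : Matrix (Fin m) (Fin n) ℝ) (b : Fin m → ℝ) (P : Matrix (Fin (q+1)) (Fin n) ℝ)
    (Y : Matrix (Fin (q+1)) (Fin p) ℝ)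
    (C : Set (Fin (q+1) → ℝ))
    (hC : C = {y | ∃ lam : Fin p → ℝ, 0 ≤ lam ∧ y = Y.mulVec lam})
    (hCpointed : ∀ x ∈ C, -x ∈ C → x = 0)
    (c : Fin (q+1) → ℝ) (hc : c ∈ interior C) (hcq : c (Fin.last q) = 1)
    (S : Set (Fin n → ℝ)) (hS : S = {x | b ≤ B.mulVec x}) (hSne : S.Nonempty)
    (Ph : Set (Fin (q+1) → ℝ))
    (hPh : Ph = {y | ∃ x : Fin n → ℝ, 0 ≤ B.mulVec x ∧ ∃ k ∈ C, y = P.mulVec x + k})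
    (tstar : Fin (q+1) → ℝ)
    (htstar : ∀ y ∈ Ph, 0 ≤ wOf q c tstar ⬝ᵥ y) :
    ∃ xbar ∈ S, ∀ x ∈ S,
      wOf q c tstar ⬝ᵥ P.mulVec xbar ≤ wOf q c tstar ⬝ᵥ P.mulVec x := by
  classical
  set w : Fin (q+1) → ℝ := wOf q c tstar with hw
  set c' : Fin n → ℝ := vecMul w P with hc'
  have hobj : ∀ x : Fin n → ℝ, w ⬝ᵥ P.mulVec x = c' ⬝ᵥ x := fun x =>
    Matrix.dotProduct_mulVec w P x
  -- 0 ∈ C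
  have h0C : (0 : Fin (q+1) → ℝ) ∈ C := by
    rw [hC]
    exact ⟨0, le_refl 0, by rw [Matrix.mulVec_zero]⟩
  -- nonnegativity on the recession cone
  have h0 : ∀ d : Fin n → ℝ, (∀ i, 0 ≤ B i ⬝ᵥ d) → 0 ≤ c' ⬝ᵥ d := by
    intro d hd
    have hmem : P.mulVec d ∈ Ph := by
      rw [hPh]
      exact ⟨d, fun i => hd i, 0, h0C, by rw [add_zero]⟩
    have := htstar _ hmem
    rwa [hobj] at this
  obtain ⟨y₀, hy₀, hy₀row⟩ := LPAux.dual_exists (fun i => B i) c' h0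
  have hy₀B : vecMul y₀ B = c' := funext fun j => hy₀row j
  -- the set of objective values
  set O : Set ℝ := (fun x => c' ⬝ᵥ x) '' S with hO
  have hOne : O.Nonempty := hSne.image _
  have hbdd : BddBelow O := by
    refine ⟨y₀ ⬝ᵥ b, ?_⟩
    rintro r ⟨x, hx, rfl⟩
    have hx' : b ≤ B.mulVec x := by rw [hS] at hx; exact hx
    have := LPAux.dual_lb B b y₀ hy₀ x hx'
    rwa [hy₀B] at this
  set μ : ℝ := sInf O with hμ
  set rows' : Fin (m+1) → (Fin n → ℝ) := Fin.snoc (fun i => B i) (-c') with hrows'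
  set a' : Fin (m+1) → ℝ := Fin.snoc b (-μ) with ha'
  by_cases hfeas : ∃ x : Fin n → ℝ, ∀ i, a' i ≤ rows' i ⬝ᵥ x
  · obtain ⟨xbar, hxbar⟩ := hfeas
    have hxbarS : xbar ∈ S := by
      rw [hS]
      intro i
      have := hxbar i.castSucc
      simpa only [ha', hrows', Fin.snoc_castSucc, Matrix.mulVec, dotProduct] using this
    have hxbarμ : c' ⬝ᵥ xbar ≤ μ := by
      have := hxbar (Fin.last m)
      simp only [ha', hrows', Fin.snoc_last, neg_dotProduct] at this
      linarith
    refine ⟨xbar, hxbarS, fun x hx => ?_⟩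
    rw [hobj, hobj]
    exact le_trans hxbarμ (csInf_le hbdd ⟨x, hx, rfl⟩)
  · exfalso
    obtain ⟨y, hy0, hyrow, hypos⟩ := LPAux.gale rows' a' hfeas
    set u : Fin m → ℝ := fun i => y i.castSucc with hu
    set lam : ℝ := y (Fin.last m) with hlam
    have hrow : ∀ j, ∑ i : Fin m, u i * B i j = lam * c' j := by
      intro j
      have := hyrow j
      rw [Fin.sum_univ_castSucc] at this
      simp only [hrows', Fin.snoc_castSucc, Fin.snoc_last, Pi.neg_apply] at this
      have h2 : ∑ i : Fin m, y i.castSucc * B i j + lam * -c' j = 0 := this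
      linarith [h2]
    have hpos : 0 < ∑ i : Fin m, b i * u i + (-μ) * lam := by
      have := hypos
      rw [Fin.sum_univ_castSucc] at this
      simpa only [ha', Fin.snoc_castSucc, Fin.snoc_last] using this
    rcases (hy0 (Fin.last m)).eq_or_lt with hl0 | hl0
    · -- lam = 0
      have hlam0 : lam = 0 := hl0.symm
      obtain ⟨x₀, hx₀⟩ := hSne
      have hx₀' : b ≤ B.mulVec x₀ := by rw [hS] at hx₀; exact hx₀
      have huB : vecMul u B = 0 := by
        funext j
        have := hrow j
        rw [hlam0, zero_mul] at this
        exact this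
      have hub : ∀ i, 0 ≤ u i := fun i => hy0 i.castSucc
      have := LPAux.dual_lb B b u hub x₀ hx₀'
      rw [huB, zero_dotProduct] at this
      have hbu : u ⬝ᵥ b = ∑ i, b i * u i := Finset.sum_congr rfl fun i _ => mul_comm _ _
      rw [hlam0] at hpos
      rw [hbu] at this
      linarith
    · -- lam > 0
      set y'' : Fin m → ℝ := fun i => u i / lam with hy''
      have hy''B : vecMul y'' B = c' := by
        funext j
        have := hrow j
        show ∑ i, (u i / lam) * B i j = c' j
        rw [Finset.sum_congr rfl (fun i (_ : i ∈ Finset.univ) => div_mul_eq_mul_div (u i) lam (B i j)),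
          ← Finset.sum_div, this]
        exact mul_div_cancel_left₀ _ hl0.ne'
      have hy''nn : ∀ i, 0 ≤ y'' i := fun i => div_nonneg (hy0 i.castSucc) hl0.le
      have hlb : y'' ⬝ᵥ b ≤ μ := by
        apply le_csInf hOne
        rintro r ⟨x, hx, rfl⟩
        have hx' : b ≤ B.mulVec x := by rw [hS] at hx; exact hx
        have := LPAux.dual_lb B b y'' hy''nn x hx'
        rwa [hy''B] at this
      have hyb : y'' ⬝ᵥ b = (∑ i, b i * u i) / lam := by
        rw [dotProduct, Finset.sum_div]
        exact Finset.sum_congr rfl fun i _ => by rw [div_mul_eq_mul_div, mul_comm (u i) (b i)]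
      have : μ < (∑ i, b i * u i) / lam := by
        rw [lt_div_iff₀ hl0]
        linarith [hpos]
      rw [hyb] at hlb
      linarith
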